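/- Let s ≥ 2, let U = {2^{s−2},…,2^{s−1}−1} ∪ {3·2^{s−2},…,2^s−1} ⊆ Z_{2^s}, and let v ∈ {2^{s−2}, 3·2^{s−2}}. Then for every u ∈ Z_{2^s}: φ(u) + φ(v) = φ(u + v + 2^{s−1}) if u ∈ U, and φ(u) + φ(v) = φ(u + v) if u ∉ U. -/

import Mathlib

/-- The `i`-th digit of the binary expansion of `u : ZMod (2^s)`. -/
def gdigit (s : ℕ) (u : ZMod (2^s)) (i : ℕ) : ZMod 2 :=
  if (ZMod.val u).testBit i then 1 else 0

/-- Carlet's generalized Gray map `φ : ZMod (2^s) → (Z_2^{s-1} → Z_2)`: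
the coordinate indexed by `y ∈ Z_2^{s-1}` is `u_{s-1} + ∑ u_i y_i`. -/
def gray (s : ℕ) (u : ZMod (2^s)) : (Fin (s - 1) → ZMod 2) → ZMod 2 :=
  fun y => gdigit s u (s - 1) + ∑ i : Fin (s - 1), gdigit s u (i : ℕ) * y i

lemma tb_lo {n : ℕ} (x k : ℕ) (hx : x < 2^n) {i : ℕ} (hi : i < n) :
    (x + 2^n * k).testBit i = x.testBit i := by
  have h : (x + 2^n * k) % 2^n = x := by
    simp [Nat.add_mul_mod_self_left, Nat.mod_eq_of_lt hx]
  conv_rhs => rw [← h]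
  rw [Nat.testBit_mod_two_pow]
  simp [hi]

lemma tb_hi {n : ℕ} (x k : ℕ) (hx : x < 2^n) (j : ℕ) :
    (x + 2^n * k).testBit (n + j) = k.testBit j := by
  have h : (x + 2^n * k) / 2^n = k := by
    rw [Nat.add_mul_div_left _ _ (Nat.two_pow_pos n), Nat.div_eq_of_lt hx, zero_add]
  rw [Nat.testBit_eq_decide_div_mod_eq, Nat.testBit_eq_decide_div_mod_eq, pow_add, ← Nat.div_div_eq_div_mul, h]

lemma core (n a c e i : ℕ) (ha : a < 2^(n+2)) (hc : c = 1 ∨ c = 3)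
    (he : e = if a.testBit n then 2 else 0) (hi : i ≤ n + 1) :
    ((a + 2^n * (c + e)) % 2^(n+2)).testBit i
      = xor (a.testBit i) ((2^n * c).testBit i) := by
  have hpos : 0 < 2^n := Nat.two_pow_pos n
  set x := a % 2^n with hxdef
  set h := a / 2^n with hhdef
  have hx : x < 2^n := Nat.mod_lt _ hpos
  have hax : a = x + 2^n * h := (Nat.mod_add_div a (2^n)).symm
  have hh : h < 4 := by
    rw [hhdef, Nat.div_lt_iff_lt_mul hpos]
    have h4 : (2:ℕ)^(n+2) = 2^n * 4 := by ring
    omega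
  rw [Nat.testBit_mod_two_pow, show decide (i < n+2) = true from decide_eq_true (by omega),
    Bool.true_and]
  rcases Nat.lt_or_ge i n with hin | hin
  · have h1 : (a + 2^n * (c + e)).testBit i = x.testBit i := by
      rw [hax, show x + 2^n * h + 2^n*(c+e) = x + 2^n*(h+(c+e)) by ring]
      exact tb_lo x _ hx hin
    have h2 : a.testBit i = x.testBit i := by
      conv_lhs => rw [hax]
      exact tb_lo x h hx hin
    have h3 : (2^n * c).testBit i = false := by
      have := tb_lo 0 c hpos hin
      simpa using this
    rw [h1, h2, h3, Bool.xor_false]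
  · obtain ⟨j, rfl, hj⟩ : ∃ j, i = n + j ∧ j ≤ 1 := ⟨i - n, by omega, by omega⟩
    have h1 : (a + 2^n * (c + e)).testBit (n+j) = (h + (c+e)).testBit j := by
      rw [hax, show x + 2^n * h + 2^n*(c+e) = x + 2^n*(h+(c+e)) by ring]
      exact tb_hi x _ hx j
    have h2 : a.testBit (n+j) = h.testBit j := by
      conv_lhs => rw [hax]
      exact tb_hi x h hx j
    have h3 : (2^n * c).testBit (n+j) = c.testBit j := by
      have := tb_hi 0 c hpos j
      simpa using this
    have hbn : a.testBit n = h.testBit 0 := by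
      have := tb_hi x h hx 0
      conv_lhs => rw [hax]
      simpa using this
    rw [hbn] at he
    subst he
    rw [h1, h2, h3]
    rcases hc with rfl | rfl <;> interval_cases h <;> interval_cases j <;> decide

lemma gdigit_add (s : ℕ) (u v w : ZMod (2^s)) (i : ℕ)
    (hw : w.val.testBit i = xor (u.val.testBit i) (v.val.testBit i)) :
    gdigit s w i = gdigit s u i + gdigit s v i := by
  unfold gdigit
  rw [hw]
  rcases Bool.eq_false_or_eq_true (u.val.testBit i) with h1 | h1 <;>
    rcases Bool.eq_false_or_eq_true (v.val.testBit i) with h2 | h2 <;>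
    (try simp [h1, h2]) <;> decide

lemma gray_of_digits (n : ℕ) (u v w : ZMod (2^(n+2)))
    (hd : ∀ i ≤ n+1, gdigit (n+2) w i = gdigit (n+2) u i + gdigit (n+2) v i) :
    gray (n+2) u + gray (n+2) v = gray (n+2) w := by
  funext y
  show gray (n+2) u y + gray (n+2) v y = gray (n+2) w y
  unfold gray
  rw [hd (n+2-1) (by omega)]
  have hterm : ∀ i : Fin (n+2-1), gdigit (n+2) w (i:ℕ) * y i
      = gdigit (n+2) u (i:ℕ) * y i + gdigit (n+2) v (i:ℕ) * y i := by
    intro i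
    have hlt : (i:ℕ) < n+2-1 := i.isLt
    rw [hd (i:ℕ) (by omega), add_mul]
  rw [Finset.sum_congr rfl fun i _ => hterm i, Finset.sum_add_distrib]
  ring

theorem gray_add_cases (s : ℕ) (hs : 2 ≤ s) (v : ZMod (2^s))
    (hv : v = 2 ^ (s - 2) ∨ v = 3 * 2 ^ (s - 2)) (u : ZMod (2^s)) :
    ((ZMod.val u).testBit (s - 2) = true →
      gray s u + gray s v = gray s (u + v + 2 ^ (s - 1))) ∧
    ((ZMod.val u).testBit (s - 2) = false →
      gray s u + gray s v = gray s (u + v)) := by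
  obtain ⟨n, rfl⟩ : ∃ n, s = n + 2 := ⟨s - 2, by omega⟩
  haveI : NeZero (2^(n+2)) := ⟨by positivity⟩
  simp only [Nat.add_sub_cancel, show n+2-1 = n+1 from rfl] at hv ⊢
  have hval_pow : ∀ m : ℕ, m < n+2 → ((2:ZMod (2^(n+2)))^m).val = 2^m := by
    intro m hm
    have h1 : (2:ZMod (2^(n+2)))^m = ((2^m : ℕ) : ZMod (2^(n+2))) := by push_cast; ring
    rw [h1, ZMod.val_natCast, Nat.mod_eq_of_lt (Nat.pow_lt_pow_right one_lt_two hm)]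
  obtain ⟨c, hc, hvv⟩ : ∃ c, (c = 1 ∨ c = 3) ∧ v.val = 2^n * c := by
    rcases hv with rfl | rfl
    · exact ⟨1, Or.inl rfl, by rw [hval_pow n (by omega)]; ring⟩
    · refine ⟨3, Or.inr rfl, ?_⟩
      have h1 : (3 * 2^n : ZMod (2^(n+2))) = ((3 * 2^n : ℕ) : ZMod (2^(n+2))) := by
        push_cast; ring
      rw [h1, ZMod.val_natCast, Nat.mod_eq_of_lt (by
        have h2 : (2:ℕ)^(n+2) = 4 * 2^n := by ring
        have h3 : 0 < (2:ℕ)^n := Nat.two_pow_pos n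
        omega)]
      ring
  have ha : u.val < 2^(n+2) := ZMod.val_lt u
  constructor <;> intro hbit
  · have hwv : (u + v + 2^(n+1) : ZMod (2^(n+2))).val
        = (u.val + 2^n*(c+2)) % 2^(n+2) := by
      rw [ZMod.val_add, ZMod.val_add, hvv, hval_pow (n+1) (by omega), Nat.mod_add_mod]
      congr 1; ring
    apply gray_of_digits
    intro i hi
    apply gdigit_add
    rw [hwv, hvv]
    exact core n u.val c 2 i ha hc (by simp [hbit]) hi
  · have hwv : (u + v : ZMod (2^(n+2))).val = (u.val + 2^n*(c+0)) % 2^(n+2) := by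
      rw [ZMod.val_add, hvv]
      congr 1
    apply gray_of_digits
    intro i hi
    apply gdigit_add
    rw [hwv, hvv]
    exact core n u.val c 0 i ha hc (by simp [hbit]) hi
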